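/- arXiv:2604.22159 — 2 statements merged into one kernel-verified Lean document; each statement's English description precedes it below -/
import Mathlib

section
/- Let L, M be block lower triangular matrices in ℝ^{Nd×Nd} satisfying the martingale condition: L_{t,t} = L_{t+1,t} = ⋯ = L_{N,t} and M_{t,t} = M_{t+1,t} = ⋯ = M_{N,t} for each t. Then dist_AW²(L, M) = ∑_{t=1}^N (N − t + 1) · dist_BW²(L_{t,t} L_{t,t}ᵀ, M_{t,t} M_{t,t}ᵀ). -/
open Matrix BigOperators Classical

/-- Squared Frobenius norm. -/
def frobSq {m n : Type*} [Fintype m] [Fintype n] (C : Matrix m n ℝ) : ℝ :=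
  ∑ i, ∑ j, (C i j) ^ 2

/-- Frobenius norm. -/
noncomputable def frobNorm {m n : Type*} [Fintype m] [Fintype n]
    (C : Matrix m n ℝ) : ℝ :=
  Real.sqrt (frobSq C)

/-- Square root of a positive semidefinite matrix (junk value `0` otherwise). -/
noncomputable def psdSqrt {n : Type*} [Fintype n] [DecidableEq n]
    (A : Matrix n n ℝ) : Matrix n n ℝ :=
  if h : A.PosSemidef then
    (h.1.eigenvectorUnitary : Matrix n n ℝ) *
      diagonal ((↑) ∘ (√·) ∘ h.1.eigenvalues) *
      (star h.1.eigenvectorUnitary : Matrix n n ℝ)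
  else 0

/-- Nuclear norm: `‖C‖₊ = tr((CᵀC)^{1/2})`, the sum of the singular values. -/
noncomputable def nuclearNorm {m n : Type*} [Fintype m] [Fintype n] [DecidableEq n]
    (C : Matrix m n ℝ) : ℝ :=
  (psdSqrt (Cᵀ * C)).trace

/-- Squared Bures–Wasserstein distance:
`dist_BW²(A,B) = tr A + tr B − 2 tr((A^{1/2} B A^{1/2})^{1/2})`. -/
noncomputable def distBWsq {n : Type*} [Fintype n] [DecidableEq n]
    (A B : Matrix n n ℝ) : ℝ :=
  A.trace + B.trace - 2 * (psdSqrt (psdSqrt A * B * psdSqrt A)).trace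

variable {N d : ℕ}

/-- `L` is block lower triangular: all `d×d` blocks `L_{s,t}` with `s < t` vanish. -/
def BlockLowerTri (L : Matrix (Fin N × Fin d) (Fin N × Fin d) ℝ) : Prop :=
  ∀ s t : Fin N, s < t → ∀ i j : Fin d, L (s, i) (t, j) = 0

/-- The `t`-th `d×d` diagonal block of a matrix. -/
def diagBlock (A : Matrix (Fin N × Fin d) (Fin N × Fin d) ℝ) (t : Fin N) :
    Matrix (Fin d) (Fin d) ℝ :=
  fun i j => A (t, i) (t, j)

/-- The `t`-th column block `L_{·,t} ∈ ℝ^{Nd×d}` of `L`. -/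
def colBlock (L : Matrix (Fin N × Fin d) (Fin N × Fin d) ℝ) (t : Fin N) :
    Matrix (Fin N × Fin d) (Fin d) ℝ :=
  fun p j => L p (t, j)

/-- Block diagonal matrix built from `d×d` blocks `Q₁, …, Q_N`. -/
def blockDiag (Q : Fin N → Matrix (Fin d) (Fin d) ℝ) :
    Matrix (Fin N × Fin d) (Fin N × Fin d) ℝ :=
  fun p q => if p.1 = q.1 then Q q.1 p.2 q.2 else 0

/-- Squared adapted Wasserstein pseudo-distance between Cholesky factors:
`dist_AW²(L,M) = ‖L‖_F² + ‖M‖_F² − 2 ∑_t ‖(LᵀM)_{t,t}‖₊`. -/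
noncomputable def distAWsq (L M : Matrix (Fin N × Fin d) (Fin N × Fin d) ℝ) : ℝ :=
  frobSq L + frobSq M - 2 * ∑ t : Fin N, nuclearNorm (diagBlock (Lᵀ * M) t)

/-- Adapted Wasserstein pseudo-distance. -/
noncomputable def distAW (L M : Matrix (Fin N × Fin d) (Fin N × Fin d) ℝ) : ℝ :=
  Real.sqrt (distAWsq L M)

/-- The martingale condition: all blocks in a column below the diagonal agree
with the diagonal block, `L_{s,t} = L_{t,t}` for `s ≥ t`. -/
def MartingaleCond (L : Matrix (Fin N × Fin d) (Fin N × Fin d) ℝ) : Prop :=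
  ∀ s t : Fin N, t ≤ s → ∀ i j : Fin d, L (s, i) (t, j) = L (t, i) (t, j)

section PortHelpers
variable {n : Type*} [Fintype n] [DecidableEq n]

noncomputable def Matrix.PosSemidef.sqrt {A : Matrix n n ℝ} (h : A.PosSemidef) :
    Matrix n n ℝ :=
  (h.1.eigenvectorUnitary : Matrix n n ℝ) *
    diagonal ((↑) ∘ (√·) ∘ h.1.eigenvalues) *
    (star h.1.eigenvectorUnitary : Matrix n n ℝ)

open scoped MatrixOrder in
theorem Matrix.PosSemidef.sqrt_eq_cfcSqrt {A : Matrix n n ℝ} (h : A.PosSemidef) :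
    h.sqrt = CFC.sqrt A := by
  rw [CFC.sqrt_eq_cfc, cfc_nnreal_eq_real _ A, h.1.cfc_eq]
  simp only [IsHermitian.cfc, Matrix.PosSemidef.sqrt, Unitary.conjStarAlgAut_apply]
  congr 3
  funext i
  simp [Real.coe_sqrt, Real.coe_toNNReal', h.eigenvalues_nonneg i]

open scoped MatrixOrder in
theorem Matrix.PosSemidef.posSemidef_sqrt {A : Matrix n n ℝ} (h : A.PosSemidef) :
    h.sqrt.PosSemidef := by
  rw [h.sqrt_eq_cfcSqrt]; exact (CFC.sqrt_nonneg A).posSemidef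

open scoped MatrixOrder in
theorem Matrix.PosSemidef.sq_sqrt {A : Matrix n n ℝ} (h : A.PosSemidef) :
    h.sqrt ^ 2 = A := by
  rw [h.sqrt_eq_cfcSqrt]; exact CFC.sq_sqrt A h.nonneg

open scoped MatrixOrder in
theorem Matrix.PosSemidef.sqrt_mul_self {A : Matrix n n ℝ} (h : A.PosSemidef) :
    h.sqrt * h.sqrt = A := by
  rw [h.sqrt_eq_cfcSqrt]; exact CFC.sqrt_mul_sqrt_self A h.nonneg

open scoped MatrixOrder in
theorem Matrix.PosSemidef.eq_sqrt_of_sq_eq {A B : Matrix n n ℝ} (hA : A.PosSemidef)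
    (hB : B.PosSemidef) (hAB : A ^ 2 = B) : A = hB.sqrt := by
  rw [hB.sqrt_eq_cfcSqrt]
  exact ((CFC.sqrt_eq_iff B A hB.nonneg hA.nonneg).2 (by rw [← sq]; exact hAB)).symm

theorem Matrix.IsHermitian.star_mul_self_mul_eq_diagonal {A : Matrix n n ℝ}
    (hA : A.IsHermitian) :
    (star hA.eigenvectorUnitary : Matrix n n ℝ) * A * (hA.eigenvectorUnitary : Matrix n n ℝ) =
      diagonal (RCLike.ofReal ∘ hA.eigenvalues) := by
  have := hA.conjStarAlgAut_star_eigenvectorUnitary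
  simpa using this

end PortHelpers

section Aux
set_option linter.unusedSectionVars false
variable {n : Type*} [Fintype n] [DecidableEq n]

lemma conjT_eq {m k : Type*} (A : Matrix m k ℝ) : Aᴴ = Aᵀ := by
  ext i j; simp [conjTranspose_apply]

lemma psdSqrt_of_psd {A : Matrix n n ℝ} (h : A.PosSemidef) : psdSqrt A = h.sqrt := dif_pos h

lemma trace_psdSqrt_mul_comm (X : Matrix n n ℝ) :
    (psdSqrt (Xᵀ * X)).trace = (psdSqrt (X * Xᵀ)).trace := by
  have hA : (Xᵀ * X).PosSemidef := by
    simpa [conjT_eq] using posSemidef_conjTranspose_mul_self X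
  have hB : (X * Xᵀ).PosSemidef := by
    simpa [conjT_eq] using posSemidef_self_mul_conjTranspose X
  set U : Matrix n n ℝ := (hA.1.eigenvectorUnitary : Matrix n n ℝ) with hU
  set lam : n → ℝ := hA.1.eigenvalues with hlam
  have hlam0 : ∀ i, 0 ≤ lam i := hA.eigenvalues_nonneg
  have hUU : star U * U = 1 := Unitary.coe_star_mul_self _
  have hUU' : U * star U = 1 := Unitary.coe_mul_star_self _
  set Y : Matrix n n ℝ := X * U with hY
  have hYtY : Yᵀ * Y = diagonal lam := by
    have h1 : star U * (Xᵀ * X) * U = diagonal (RCLike.ofReal ∘ lam) :=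
      hA.1.star_mul_self_mul_eq_diagonal
    have : Yᵀ * Y = star U * (Xᵀ * X) * U := by
      rw [hY, transpose_mul, ← conjT_eq U]; noncomm_ring
    rw [this, h1]; rfl
  have hYcol : ∀ i, lam i = 0 → ∀ a, Y a i = 0 := by
    intro i hi a
    have h2 : ∑ k, (Y k i) ^ 2 = 0 := by
      have := congrFun (congrFun hYtY i) i
      simpa [mul_apply, diagonal_apply, hi, pow_two] using this
    have := Finset.sum_eq_zero_iff_of_nonneg (fun k _ => sq_nonneg (Y k i)) |>.mp h2 a
      (Finset.mem_univ a)
    exact pow_eq_zero_iff (n := 2) (by norm_num) |>.mp this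
  set f : n → ℝ := fun i => if lam i = 0 then 0 else (Real.sqrt (lam i))⁻¹ with hf
  set S : Matrix n n ℝ := Y * diagonal f * Yᵀ with hS
  have hSpsd : S.PosSemidef := by
    have hd : (diagonal f).PosSemidef := posSemidef_diagonal_iff.mpr (fun i => by
      by_cases h : lam i = 0 <;> simp [hf, h, Real.sqrt_nonneg, inv_nonneg])
    have := hd.mul_mul_conjTranspose_same Y
    simpa [conjT_eq] using this
  have hsq : S ^ 2 = X * Xᵀ := by
    have hgg : (fun i => f i * lam i * f i) = (fun i => if lam i = 0 then 0 else (1:ℝ)) := by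
      funext i
      by_cases h : lam i = 0
      · simp [hf, h]
      · have hpos : 0 < lam i := lt_of_le_of_ne (hlam0 i) (Ne.symm h)
        have hs : Real.sqrt (lam i) ≠ 0 := ne_of_gt (Real.sqrt_pos.mpr hpos)
        simp only [hf, if_neg h]
        field_simp [Real.mul_self_sqrt (hlam0 i)]
        exact (Real.sq_sqrt (hlam0 i)).symm
    have hdd : diagonal f * diagonal lam * diagonal f =
        diagonal (fun i => if lam i = 0 then 0 else 1) := by
      rw [diagonal_mul_diagonal, diagonal_mul_diagonal, hgg]
    have hYg : Y * diagonal (fun i => if lam i = 0 then 0 else 1) * Yᵀ = Y * Yᵀ := by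
      ext a b
      simp only [mul_apply, diagonal_apply, transpose_apply]
      rw [Finset.sum_congr rfl]
      intro k _
      rw [Finset.sum_eq_single k (by intro c _ hc; simp [hc]) (by simp)]
      by_cases h : lam k = 0
      · simp [h, hYcol k h a]
      · simp [h]
    have hUUt : U * Uᵀ = 1 := by
      have := hUU'
      rwa [Matrix.star_eq_conjTranspose, conjT_eq] at this
    have hYYt : Y * Yᵀ = X * Xᵀ := by
      rw [hY, transpose_mul, mul_assoc, ← mul_assoc U, hUUt, one_mul]
    have hexp : S ^ 2 = Y * (diagonal f * (Yᵀ * Y) * diagonal f) * Yᵀ := by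
      rw [pow_two, hS]; noncomm_ring
    rw [hexp, hYtY, hdd, hYg, hYYt]
  have hSeq : S = hB.sqrt := hSpsd.eq_sqrt_of_sq_eq hB hsq
  have htrS : S.trace = ∑ i, Real.sqrt (lam i) := by
    rw [hS, trace_mul_cycle, hYtY, diagonal_mul_diagonal, trace_diagonal]
    congr 1
    funext i
    by_cases h : lam i = 0
    · simp [hf, h]
    · have hs : Real.sqrt (lam i) ≠ 0 :=
        ne_of_gt (Real.sqrt_pos.mpr (lt_of_le_of_ne (hlam0 i) (Ne.symm h)))
      simp only [hf, if_neg h]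
      field_simp [Real.mul_self_sqrt (hlam0 i)]
      exact (Real.sq_sqrt (hlam0 i)).symm
  have htrA : hA.sqrt.trace = ∑ i, Real.sqrt (lam i) := by
    rw [Matrix.PosSemidef.sqrt, trace_mul_cycle, ← hU, hUU, one_mul, trace_diagonal]
    rfl
  rw [psdSqrt_of_psd hA, psdSqrt_of_psd hB, ← hSeq, htrS, htrA]

lemma posSemidef_smul' {A : Matrix n n ℝ} (hA : A.PosSemidef) {c : ℝ} (hc : 0 ≤ c) :
    (c • A).PosSemidef := by
  refine ⟨?_, fun x => ?_⟩
  · have : (c • A)ᴴ = c • Aᴴ := by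
      rw [conjTranspose_smul]; simp
    rw [Matrix.IsHermitian, this, hA.1.eq]
  · exact (hA.smul hc).2 x

lemma psdSqrt_smul' {A : Matrix n n ℝ} (hA : A.PosSemidef) {c : ℝ} (hc : 0 ≤ c) :
    psdSqrt ((c * c) • A) = c • psdSqrt A := by
  have h1 : ((c * c) • A).PosSemidef := posSemidef_smul' hA (mul_nonneg hc hc)
  have h2 : (c • hA.sqrt).PosSemidef := posSemidef_smul' hA.posSemidef_sqrt hc
  have h3 : (c • hA.sqrt) ^ 2 = (c * c) • A := by
    rw [smul_pow, hA.sq_sqrt, pow_two]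
  rw [psdSqrt_of_psd h1, psdSqrt_of_psd hA, ← h2.eq_sqrt_of_sq_eq h1 h3]

lemma nuclearNorm_smul' {m : Type*} [Fintype m] (C : Matrix m n ℝ) {c : ℝ} (hc : 0 ≤ c) :
    nuclearNorm (c • C) = c * nuclearNorm C := by
  have hpsd : (Cᵀ * C).PosSemidef := by
    simpa [conjT_eq] using posSemidef_conjTranspose_mul_self C
  have h : (c • C)ᵀ * (c • C) = (c * c) • (Cᵀ * C) := by
    rw [transpose_smul, Matrix.smul_mul, Matrix.mul_smul, smul_smul]
  rw [nuclearNorm, h, psdSqrt_smul' hpsd hc, trace_smul, smul_eq_mul, nuclearNorm]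

lemma trace_mul_transpose_self' {m : Type*} [Fintype m] (P : Matrix n m ℝ) :
    (P * Pᵀ).trace = frobSq P := by
  simp [Matrix.trace, Matrix.mul_apply, frobSq, pow_two, Matrix.diag]

lemma distBW_bridge (P Q : Matrix n n ℝ) :
    distBWsq (P * Pᵀ) (Q * Qᵀ) = frobSq P + frobSq Q - 2 * nuclearNorm (Pᵀ * Q) := by
  have hP : (P * Pᵀ).PosSemidef := by
    simpa [conjT_eq] using posSemidef_self_mul_conjTranspose P
  set S := psdSqrt (P * Pᵀ) with hSdef
  have hSspec : S = hP.sqrt := psdSqrt_of_psd hP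
  have hSsym : Sᵀ = S := by
    rw [hSspec, ← conjT_eq]; exact hP.posSemidef_sqrt.1
  have hSS : S * S = P * Pᵀ := by rw [hSspec]; exact hP.sqrt_mul_self
  have key : (psdSqrt (S * (Q * Qᵀ) * S)).trace = nuclearNorm (Pᵀ * Q) := by
    have h1 : S * (Q * Qᵀ) * S = (S * Q) * (S * Q)ᵀ := by
      rw [transpose_mul, hSsym]; noncomm_ring
    have h2 : (S * Q)ᵀ * (S * Q) = (Pᵀ * Q)ᵀ * (Pᵀ * Q) := by
      rw [transpose_mul, hSsym, transpose_mul, transpose_transpose]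
      calc Qᵀ * S * (S * Q) = Qᵀ * (S * S) * Q := by noncomm_ring
        _ = Qᵀ * P * (Pᵀ * Q) := by rw [hSS]; noncomm_ring
    rw [h1, ← trace_psdSqrt_mul_comm (S * Q), h2, nuclearNorm]
  rw [distBWsq, ← hSdef, key, trace_mul_transpose_self' P, trace_mul_transpose_self' Q]

end Aux

lemma sum_ite_le (t : Fin N) (x : ℝ) :
    (∑ s : Fin N, if t ≤ s then x else 0) = ((N - (t : ℕ) : ℕ) : ℝ) * x := by
  classical
  rw [← Finset.sum_filter, Finset.sum_const, nsmul_eq_mul]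
  congr 2
  have h : (Finset.univ.filter fun s : Fin N => t ≤ s) = Finset.Ici t := by
    ext s; simp
  rw [h, Fin.card_Ici]

lemma frobSq_block {L : Matrix (Fin N × Fin d) (Fin N × Fin d) ℝ}
    (hL : BlockLowerTri L) (hLmart : MartingaleCond L) :
    frobSq L = ∑ t : Fin N, ((N - (t : ℕ) : ℕ) : ℝ) * frobSq (diagBlock L t) := by
  have key : ∀ s t : Fin N, (∑ i, ∑ j, (L (s, i) (t, j)) ^ 2) =
      if t ≤ s then frobSq (diagBlock L t) else 0 := by
    intro s t
    by_cases h : t ≤ s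
    · rw [if_pos h]
      unfold frobSq diagBlock
      exact Finset.sum_congr rfl fun i _ => Finset.sum_congr rfl fun j _ => by
        rw [hLmart s t h i j]
    · rw [if_neg h]
      have hst : s < t := lt_of_not_ge h
      simp [hL s t hst]
  calc frobSq L = ∑ s : Fin N, ∑ t : Fin N, ∑ i, ∑ j, (L (s, i) (t, j)) ^ 2 := by
        rw [frobSq]
        simp only [Fintype.sum_prod_type]
        exact Finset.sum_congr rfl fun s _ => Finset.sum_comm
    _ = ∑ t : Fin N, ∑ s : Fin N, (if t ≤ s then frobSq (diagBlock L t) else 0) := by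
        rw [Finset.sum_comm]
        exact Finset.sum_congr rfl fun t _ => Finset.sum_congr rfl fun s _ => key s t
    _ = _ := Finset.sum_congr rfl fun t _ => sum_ite_le t _

lemma diagBlock_transpose_mul {L M : Matrix (Fin N × Fin d) (Fin N × Fin d) ℝ}
    (hL : BlockLowerTri L) (hLmart : MartingaleCond L)
    (hM : BlockLowerTri M) (hMmart : MartingaleCond M) (t : Fin N) :
    diagBlock (Lᵀ * M) t =
      ((N - (t : ℕ) : ℕ) : ℝ) • ((diagBlock L t)ᵀ * diagBlock M t) := by
  ext i j
  have : diagBlock (Lᵀ * M) t i j =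
      ∑ s : Fin N, (if t ≤ s then ((diagBlock L t)ᵀ * diagBlock M t) i j else 0) := by
    rw [diagBlock, Matrix.mul_apply, Fintype.sum_prod_type]
    refine Finset.sum_congr rfl fun s _ => ?_
    by_cases h : t ≤ s
    · rw [if_pos h, Matrix.mul_apply]
      refine Finset.sum_congr rfl fun k _ => ?_
      rw [transpose_apply, transpose_apply, diagBlock, diagBlock,
        ← hLmart s t h k i, ← hMmart s t h k j]
    · rw [if_neg h]
      have hst : s < t := lt_of_not_ge h
      simp [hL s t hst]
  rw [this, sum_ite_le, Matrix.smul_apply, smul_eq_mul]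

/-- `dist_AW` between Gaussian martingales:
`dist_AW²(L,M) = ∑_t (N − t + 1) dist_BW²(L_{t,t}L_{t,t}ᵀ, M_{t,t}M_{t,t}ᵀ)`. -/
theorem distAWsq_martingale (N d : ℕ)
    (L M : Matrix (Fin N × Fin d) (Fin N × Fin d) ℝ)
    (hL : BlockLowerTri L) (hM : BlockLowerTri M)
    (hLmart : MartingaleCond L) (hMmart : MartingaleCond M) :
    distAWsq L M = ∑ t : Fin N, ((N - (t : ℕ) : ℕ) : ℝ) *
      distBWsq (diagBlock L t * (diagBlock L t)ᵀ)
        (diagBlock M t * (diagBlock M t)ᵀ) := by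
  have cnn : ∀ t : Fin N, (0 : ℝ) ≤ ((N - (t : ℕ) : ℕ) : ℝ) := fun t => Nat.cast_nonneg _
  have h1 : ∑ t : Fin N, nuclearNorm (diagBlock (Lᵀ * M) t) =
      ∑ t : Fin N, ((N - (t : ℕ) : ℕ) : ℝ) *
        nuclearNorm ((diagBlock L t)ᵀ * diagBlock M t) :=
    Finset.sum_congr rfl fun t _ => by
      rw [diagBlock_transpose_mul hL hLmart hM hMmart t, nuclearNorm_smul' _ (cnn t)]
  have h2 : ∑ t : Fin N, ((N - (t : ℕ) : ℕ) : ℝ) *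
      distBWsq (diagBlock L t * (diagBlock L t)ᵀ) (diagBlock M t * (diagBlock M t)ᵀ) =
      ∑ t : Fin N, ((N - (t : ℕ) : ℕ) : ℝ) *
        (frobSq (diagBlock L t) + frobSq (diagBlock M t)
          - 2 * nuclearNorm ((diagBlock L t)ᵀ * diagBlock M t)) :=
    Finset.sum_congr rfl fun t _ => by rw [distBW_bridge]
  rw [distAWsq, frobSq_block hL hLmart, frobSq_block hM hMmart, h1, h2,
    Finset.mul_sum, ← Finset.sum_add_distrib, ← Finset.sum_sub_distrib]
  exact Finset.sum_congr rfl fun t _ => by ring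
end

section
/- Let L ∈ ℝ^{Nd×Nd} be block lower triangular and let 𝒦 be the set of block lower triangular M satisfying the martingale condition M_{t,t} = M_{t+1,t} = ⋯ = M_{N,t} for all t. Then M̂ ∈ 𝒦 minimizes dist_AW(L, M) over M ∈ 𝒦 if and only if M̂_{t,t} = ( (1/(N−t+1)) ∑_{s=t}^N L_{s,t} ) Q_t for some orthogonal matrices Q_t ∈ O(d), t = 1,…,N (with the remaining blocks determined by the martingale condition). -/
open Matrix BigOperators Classical

variable {N d : ℕ}

section AuxHelpers
variable {m n : Type*} [Fintype m] [Fintype n]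

lemma frobSq_nonneg (C : Matrix m n ℝ) : 0 ≤ frobSq C :=
  Finset.sum_nonneg fun _ _ => Finset.sum_nonneg fun _ _ => sq_nonneg _

lemma frobSq_eq_zero {C : Matrix m n ℝ} (h : frobSq C = 0) : C = 0 := by
  ext i j
  have h1 : ∀ i ∈ Finset.univ, (0:ℝ) ≤ ∑ j, (C i j)^2 :=
    fun i _ => Finset.sum_nonneg fun j _ => sq_nonneg _
  have h2 := (Finset.sum_eq_zero_iff_of_nonneg h1).mp h i (Finset.mem_univ i)
  have h3 : ∀ j ∈ Finset.univ, (0:ℝ) ≤ (C i j)^2 := fun j _ => sq_nonneg _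
  have := (Finset.sum_eq_zero_iff_of_nonneg h3).mp h2 j (Finset.mem_univ j)
  simpa using pow_eq_zero_iff (n := 2) (by norm_num) |>.mp this

lemma frobTraceSum (X Y : Matrix m n ℝ) :
    (Xᵀ * Y).trace = ∑ i, ∑ j, X i j * Y i j := by
  rw [Matrix.trace]
  simp only [Matrix.diag_apply, Matrix.mul_apply, Matrix.transpose_apply]
  exact Finset.sum_comm

lemma frobSq_eq_trace (X : Matrix m n ℝ) : frobSq X = (Xᵀ * X).trace := by
  rw [frobTraceSum, frobSq]
  congr 1; funext i; congr 1; funext j; ring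

lemma frobSq_sub (X Y : Matrix m n ℝ) :
    frobSq (X - Y) = frobSq X - 2 * (Xᵀ * Y).trace + frobSq Y := by
  rw [frobTraceSum, frobSq, frobSq, frobSq]
  rw [Finset.mul_sum, ← Finset.sum_sub_distrib, ← Finset.sum_add_distrib]
  congr 1; funext i
  rw [Finset.mul_sum, ← Finset.sum_sub_distrib, ← Finset.sum_add_distrib]
  congr 1; funext j
  simp only [Matrix.sub_apply]
  ring

lemma frobSq_smul (c : ℝ) (X : Matrix m n ℝ) : frobSq (c • X) = c^2 * frobSq X := by
  simp only [frobSq, Matrix.smul_apply, smul_eq_mul, mul_pow, Finset.mul_sum]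

end AuxHelpers

lemma psdSqrt_eq {n : Type*} [Fintype n] [DecidableEq n] {A B : Matrix n n ℝ}
    (hA : A.PosSemidef) (hB : B.PosSemidef) (h : B * B = A) : psdSqrt A = B := by
  rw [psdSqrt, dif_pos hA]
  open scoped MatrixOrder in
  have h1 : CFC.sqrt A = B := CFC.sqrt_unique h hB.nonneg
  open scoped MatrixOrder in
  rw [← h1, CFC.sqrt_eq_cfc, cfc_nnreal_eq_real _ A hA.nonneg, hA.1.cfc_eq, IsHermitian.cfc,
    Unitary.conjStarAlgAut_apply]
  congr 3
  funext i
  simp [Real.coe_sqrt, Real.coe_toNNReal', max_eq_left (hA.eigenvalues_nonneg i)]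

lemma orth_mul_self {d : ℕ} {Q : Matrix (Fin d) (Fin d) ℝ} (hQ : Qᵀ * Q = 1) :
    Q * Qᵀ = 1 := mul_eq_one_comm.mp hQ

/-- Procrustes existence: some orthogonal `Q` attains `tr (C*Q) = ‖C‖₊`. -/
lemma exists_orth_trace_eq (d : ℕ) (C : Matrix (Fin d) (Fin d) ℝ) :
    ∃ Q : Matrix (Fin d) (Fin d) ℝ, Qᵀ * Q = 1 ∧ (C * Q).trace = nuclearNorm C := by
  have hP : (Cᵀ * C).PosSemidef := by
    simpa [conjTranspose_eq_transpose_of_trivial] using posSemidef_conjTranspose_mul_self C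
  have hH := hP.isHermitian
  set V : Matrix (Fin d) (Fin d) ℝ := (hH.eigenvectorUnitary : Matrix (Fin d) (Fin d) ℝ) with hVdef
  have hV : Vᵀ * V = 1 := by
    have h := (Matrix.mem_unitaryGroup_iff'.mp hH.eigenvectorUnitary.2)
    simpa [hVdef, conjTranspose_eq_transpose_of_trivial, star_eq_conjTranspose] using h
  have hVVt : V * Vᵀ = 1 := orth_mul_self hV
  set lam := hH.eigenvalues with hlamdef
  have hlam : ∀ i, 0 ≤ lam i := fun i => hP.eigenvalues_nonneg i
  have hspec : Cᵀ * C = V * diagonal lam * Vᵀ := by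
    have h := hH.spectral_theorem
    simpa [hVdef, hlamdef, star_eq_conjTranspose, conjTranspose_eq_transpose_of_trivial] using h
  set σ : Fin d → ℝ := fun i => Real.sqrt (lam i) with hσdef
  have hσσ : ∀ i, σ i * σ i = lam i := fun i => Real.mul_self_sqrt (hlam i)
  set B : Matrix (Fin d) (Fin d) ℝ := C * V with hBdef
  have hBtB : Bᵀ * B = diagonal lam := by
    have : Bᵀ * B = Vᵀ * (Cᵀ * C) * V := by
      rw [hBdef, transpose_mul]; noncomm_ring
    rw [this, hspec]
    have : Vᵀ * (V * diagonal lam * Vᵀ) * V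
        = (Vᵀ * V) * diagonal lam * (Vᵀ * V) := by noncomm_ring
    rw [this, hV, one_mul, mul_one]
  have hcol : ∀ i j, (∑ k, B k i * B k j) = diagonal lam i j := by
    intro i j
    rw [← hBtB]
    simp [Matrix.mul_apply]
  set v : Fin d → EuclideanSpace ℝ (Fin d) := fun i => (σ i)⁻¹ • WithLp.toLp 2 (fun k => B k i) with hvdef
  have hinner : ∀ i j, inner ℝ (v i) (v j) = (σ i)⁻¹ * (σ j)⁻¹ * diagonal lam i j := by
    intro i j
    rw [hvdef]
    simp only [real_inner_smul_left, real_inner_smul_right]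
    have : inner ℝ (WithLp.toLp 2 (fun k => B k i) : EuclideanSpace ℝ (Fin d))
          (WithLp.toLp 2 (fun k => B k j))
        = ∑ k, B k i * B k j := by
      simp [PiLp.inner_apply, RCLike.inner_apply]
      exact Finset.sum_congr rfl fun x _ => mul_comm _ _
    rw [this, hcol i j]; ring
  have hv : Orthonormal ℝ (({i | lam i ≠ 0} : Set (Fin d)).restrict v) := by
    rw [orthonormal_iff_ite]
    rintro ⟨i, hi⟩ ⟨j, hj⟩
    simp only [Set.restrict_apply, Subtype.mk.injEq]
    change inner ℝ (v i) (v j) = _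
    rw [hinner i j]
    rcases eq_or_ne i j with rfl | hne
    · have hσne : σ i ≠ 0 := by
        simp only [hσdef]
        exact ne_of_gt (Real.sqrt_pos.mpr (lt_of_le_of_ne (hlam i) (Ne.symm hi)))
      rw [if_pos rfl, diagonal_apply_eq, ← hσσ i]
      field_simp
    · rw [if_neg hne, diagonal_apply_ne _ hne, mul_zero]
  obtain ⟨u, hu⟩ := hv.exists_orthonormalBasis_extension_of_card_eq
    (by simp [finrank_euclideanSpace])
  set U : Matrix (Fin d) (Fin d) ℝ := fun k i => u i k with hUdef
  have hU : Uᵀ * U = 1 := by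
    ext i j
    have := orthonormal_iff_ite.mp u.orthonormal i j
    rw [Matrix.mul_apply, Matrix.one_apply]
    simp only [transpose_apply, hUdef]
    rw [← this]
    simp [PiLp.inner_apply, RCLike.inner_apply]
    exact Finset.sum_congr rfl fun x _ => mul_comm _ _
  have hBcolzero : ∀ i, lam i = 0 → ∀ k, B k i = 0 := by
    intro i h0 k
    have hsum : ∑ k, B k i * B k i = 0 := by rw [hcol i i, diagonal_apply_eq, h0]
    have : ∀ k ∈ Finset.univ, (0:ℝ) ≤ B k i * B k i := fun k _ => mul_self_nonneg _
    have := (Finset.sum_eq_zero_iff_of_nonneg this).mp hsum k (Finset.mem_univ k)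
    exact mul_self_eq_zero.mp this
  have hCV : C * V = U * diagonal σ := by
    ext k i
    rw [Matrix.mul_diagonal]
    rcases eq_or_ne (lam i) 0 with h0 | h0
    · have : σ i = 0 := by simp [hσdef, h0]
      rw [this, mul_zero]
      exact hBcolzero i h0 k
    · have hui := hu i h0
      have hUki : U k i = (σ i)⁻¹ * B k i := by
        show u i k = (σ i)⁻¹ * B k i
        rw [hui, hvdef]
        simp
      rw [hUki]
      have hσne : σ i ≠ 0 := by
        simp only [hσdef]
        exact ne_of_gt (Real.sqrt_pos.mpr (lt_of_le_of_ne (hlam i) (Ne.symm h0)))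
      show B k i = (σ i)⁻¹ * B k i * σ i
      field_simp
  have hC : C = U * diagonal σ * Vᵀ := by
    rw [← hCV, mul_assoc, hVVt, mul_one]
  have hσpsd : (diagonal σ).PosSemidef :=
    PosSemidef.diagonal (fun i => Real.sqrt_nonneg _)
  have hSpsd : (V * diagonal σ * Vᵀ).PosSemidef := by
    have := hσpsd.mul_mul_conjTranspose_same V
    simpa [conjTranspose_eq_transpose_of_trivial] using this
  have hSsq : (V * diagonal σ * Vᵀ) * (V * diagonal σ * Vᵀ) = Cᵀ * C := by
    have h1 : (V * diagonal σ * Vᵀ) * (V * diagonal σ * Vᵀ)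
        = V * (diagonal σ * (Vᵀ * V) * diagonal σ) * Vᵀ := by noncomm_ring
    have hdd : diagonal σ * diagonal σ = diagonal lam := by
      rw [diagonal_mul_diagonal]
      exact congrArg diagonal (funext fun i => hσσ i)
    rw [h1, hV, mul_one, hdd, hspec]
  have hsqrt : psdSqrt (Cᵀ * C) = V * diagonal σ * Vᵀ := psdSqrt_eq hP hSpsd hSsq
  have hnucl : nuclearNorm C = ∑ i, σ i := by
    rw [nuclearNorm, hsqrt, trace_mul_cycle, hV, one_mul, trace_diagonal]
  refine ⟨V * Uᵀ, ?_, ?_⟩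
  · rw [transpose_mul, transpose_transpose]
    have : U * Vᵀ * (V * Uᵀ) = U * (Vᵀ * V) * Uᵀ := by noncomm_ring
    rw [this, hV, mul_one, orth_mul_self hU]
  · rw [hnucl]
    conv_lhs => rw [hC]
    have : U * diagonal σ * Vᵀ * (V * Uᵀ) = U * diagonal σ * (Vᵀ * V) * Uᵀ := by noncomm_ring
    rw [this, hV, mul_one, trace_mul_cycle, hU, one_mul, trace_diagonal]

/-- nuclear norm of (psd * orthogonal) is the trace of the psd factor. -/
lemma nuclearNorm_psd_mul_orth {d : ℕ} {P Q : Matrix (Fin d) (Fin d) ℝ}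
    (hP : P.PosSemidef) (hQ : Qᵀ * Q = 1) : nuclearNorm (P * Q) = P.trace := by
  have hPt : Pᵀ = P := by
    have := hP.isHermitian
    rwa [IsHermitian, conjTranspose_eq_transpose_of_trivial] at this
  have hS : (Qᵀ * P * Q).PosSemidef := by
    have := hP.conjTranspose_mul_mul_same Q
    simpa [conjTranspose_eq_transpose_of_trivial] using this
  have harg : (P * Q)ᵀ * (P * Q) = Qᵀ * (P * P) * Q := by
    rw [transpose_mul, hPt]; noncomm_ring
  have hsq : (Qᵀ * P * Q) * (Qᵀ * P * Q) = (P * Q)ᵀ * (P * Q) := by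
    rw [harg]
    have h1 : (Qᵀ * P * Q) * (Qᵀ * P * Q) = Qᵀ * (P * (Q * Qᵀ) * P) * Q := by noncomm_ring
    rw [h1, orth_mul_self hQ, mul_one]
  have hpsd : ((P * Q)ᵀ * (P * Q)).PosSemidef := by
    simpa [conjTranspose_eq_transpose_of_trivial] using posSemidef_conjTranspose_mul_self (P * Q)
  rw [nuclearNorm, psdSqrt_eq hpsd hS hsq, trace_mul_cycle, orth_mul_self hQ, one_mul]

lemma posSemidef_smul {d : ℕ} {P : Matrix (Fin d) (Fin d) ℝ} (hP : P.PosSemidef)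
    {c : ℝ} (hc : 0 ≤ c) : (c • P).PosSemidef := by
  exact hP.smul hc

/-- The main pointwise quadratic minimization lemma. -/
lemma gval_key {d : ℕ} (n : ℝ) (hn : 0 < n) (A X : Matrix (Fin d) (Fin d) ℝ) :
    -(frobSq A / n) ≤ n * frobSq X - 2 * nuclearNorm (Aᵀ * X) ∧
    (n * frobSq X - 2 * nuclearNorm (Aᵀ * X) = -(frobSq A / n) ↔
      ∃ Q : Matrix (Fin d) (Fin d) ℝ, Qᵀ * Q = 1 ∧ X = (n⁻¹ • A) * Q) := by
  obtain ⟨Q, hQ, hQtr⟩ := exists_orth_trace_eq d (Aᵀ * X)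
  have hQQt : Q * Qᵀ = 1 := orth_mul_self hQ
  have hn' : n ≠ 0 := ne_of_gt hn
  -- cross term
  have hT : (Xᵀ * (A * Qᵀ)).trace = nuclearNorm (Aᵀ * X) := by
    rw [← hQtr]
    have h1 : Xᵀ * (A * Qᵀ) = (Q * Aᵀ * X)ᵀ := by
      simp only [transpose_mul, transpose_transpose]
    rw [h1, trace_transpose, ← trace_mul_cycle]
  have hAQt : frobSq (A * Qᵀ) = frobSq A := by
    rw [frobSq_eq_trace, frobSq_eq_trace, transpose_mul, transpose_transpose]
    have h1 : Q * Aᵀ * (A * Qᵀ) = Q * (Aᵀ * A) * Qᵀ := by noncomm_ring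
    rw [h1, trace_mul_cycle, ← mul_assoc, hQ, one_mul]
  -- key identity
  have hid : n * frobSq X - 2 * nuclearNorm (Aᵀ * X)
      = n * frobSq (X - n⁻¹ • (A * Qᵀ)) - frobSq A / n := by
    rw [frobSq_sub, frobSq_smul]
    have hsm : (Xᵀ * (n⁻¹ • (A * Qᵀ))).trace = n⁻¹ * nuclearNorm (Aᵀ * X) := by
      rw [Matrix.mul_smul, trace_smul, hT, smul_eq_mul]
    rw [hsm, hAQt]
    field_simp
    ring
  constructor
  · rw [hid]
    have := mul_nonneg (le_of_lt hn) (frobSq_nonneg (X - n⁻¹ • (A * Qᵀ)))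
    linarith
  constructor
  · intro heq
    rw [hid] at heq
    have hz : frobSq (X - n⁻¹ • (A * Qᵀ)) = 0 := by
      have h0 : n * frobSq (X - n⁻¹ • (A * Qᵀ)) = 0 := by linarith
      exact (mul_eq_zero.mp h0).resolve_left hn'
    have hXz := frobSq_eq_zero hz
    have hX : X = n⁻¹ • (A * Qᵀ) := by
      have := sub_eq_zero.mp hXz; exact this
    refine ⟨Qᵀ, by rw [transpose_transpose, hQQt], ?_⟩
    rw [hX, Matrix.smul_mul]
  · rintro ⟨Q', hQ', rfl⟩
    have hAtA : (Aᵀ * A).PosSemidef := by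
      simpa [conjTranspose_eq_transpose_of_trivial] using posSemidef_conjTranspose_mul_self A
    have harg : Aᵀ * ((n⁻¹ • A) * Q') = (n⁻¹ • (Aᵀ * A)) * Q' := by
      rw [Matrix.smul_mul, Matrix.mul_smul, Matrix.smul_mul, mul_assoc]
    have hnucl : nuclearNorm (Aᵀ * ((n⁻¹ • A) * Q')) = n⁻¹ * frobSq A := by
      rw [harg, nuclearNorm_psd_mul_orth (posSemidef_smul hAtA (by positivity)) hQ',
        trace_smul, smul_eq_mul, ← frobSq_eq_trace]
    have hfX : frobSq ((n⁻¹ • A) * Q') = n⁻¹^2 * frobSq A := by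
      rw [Matrix.smul_mul, frobSq_smul]
      congr 1
      rw [frobSq_eq_trace, frobSq_eq_trace, transpose_mul]
      have h1 : Q'ᵀ * Aᵀ * (A * Q') = Q'ᵀ * (Aᵀ * A) * Q' := by noncomm_ring
      rw [h1, trace_mul_cycle, ← mul_assoc, orth_mul_self hQ', one_mul]
    rw [hnucl, hfX]
    field_simp
    ring

section Decomp
variable {N d : ℕ}

/-- Sum of the blocks in the `t`-th block column of `L` on and below the diagonal. -/
noncomputable def Asum (L : Matrix (Fin N × Fin d) (Fin N × Fin d) ℝ) (t : Fin N) :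
    Matrix (Fin d) (Fin d) ℝ :=
  ∑ s ∈ Finset.univ.filter (fun s : Fin N => t ≤ s),
    Matrix.of (fun i j : Fin d => L (s, i) (t, j))

lemma Asum_apply (L : Matrix (Fin N × Fin d) (Fin N × Fin d) ℝ) (t : Fin N) (k i : Fin d) :
    Asum L t k i = ∑ s ∈ Finset.univ.filter (fun s : Fin N => t ≤ s), L (s, k) (t, i) := by
  rw [Asum]
  simp [Matrix.sum_apply]

lemma card_ge (t : Fin N) :
    (Finset.univ.filter (fun s : Fin N => t ≤ s)).card = N - (t : ℕ) := by
  have h : Finset.univ.filter (fun s : Fin N => t ≤ s) = Finset.Ici t := by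
    ext s; simp
  rw [h, Fin.card_Ici]

lemma ntR_pos (t : Fin N) : (0:ℝ) < ((N - (t : ℕ) : ℕ) : ℝ) := by
  have : 0 < N - (t : ℕ) := Nat.sub_pos_of_lt t.isLt
  exact_mod_cast this

lemma diagBlock_LtM (L M : Matrix (Fin N × Fin d) (Fin N × Fin d) ℝ)
    (hL : BlockLowerTri L) (hMart : MartingaleCond M) (t : Fin N) :
    diagBlock (Lᵀ * M) t = (Asum L t)ᵀ * diagBlock M t := by
  ext i j
  show (Lᵀ * M) (t, i) (t, j) = ((Asum L t)ᵀ * diagBlock M t) i j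
  rw [Matrix.mul_apply, Fintype.sum_prod_type]
  simp only [Matrix.transpose_apply]
  calc ∑ s : Fin N, ∑ k : Fin d, L (s, k) (t, i) * M (s, k) (t, j)
      = ∑ s ∈ Finset.univ.filter (fun s : Fin N => t ≤ s),
          ∑ k : Fin d, L (s, k) (t, i) * M (s, k) (t, j) := by
        refine (Finset.sum_filter_of_ne ?_).symm
        intro s _ hne
        by_contra hnot
        apply hne
        have hst : s < t := lt_of_not_ge hnot
        refine Finset.sum_eq_zero fun k _ => ?_
        rw [hL s t hst k i, zero_mul]
    _ = ∑ s ∈ Finset.univ.filter (fun s : Fin N => t ≤ s),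
          ∑ k : Fin d, L (s, k) (t, i) * M (t, k) (t, j) := by
        refine Finset.sum_congr rfl fun s hs => Finset.sum_congr rfl fun k _ => ?_
        rw [hMart s t (Finset.mem_filter.mp hs).2 k j]
    _ = ∑ k : Fin d, ∑ s ∈ Finset.univ.filter (fun s : Fin N => t ≤ s),
          L (s, k) (t, i) * M (t, k) (t, j) := Finset.sum_comm
    _ = ∑ k : Fin d, (∑ s ∈ Finset.univ.filter (fun s : Fin N => t ≤ s),
          L (s, k) (t, i)) * M (t, k) (t, j) := by
        refine Finset.sum_congr rfl fun k _ => ?_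
        rw [Finset.sum_mul]
    _ = ((Asum L t)ᵀ * diagBlock M t) i j := by
        rw [Matrix.mul_apply]
        refine Finset.sum_congr rfl fun k _ => ?_
        rw [Matrix.transpose_apply, Asum_apply]
        rfl

lemma frobSq_prod (M : Matrix (Fin N × Fin d) (Fin N × Fin d) ℝ) :
    frobSq M = ∑ t : Fin N, ∑ s : Fin N, ∑ i : Fin d, ∑ j : Fin d, (M (s, i) (t, j))^2 := by
  rw [frobSq, Fintype.sum_prod_type]
  calc ∑ s : Fin N, ∑ i : Fin d, ∑ q : Fin N × Fin d, (M (s, i) q)^2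
      = ∑ s : Fin N, ∑ i : Fin d, ∑ t : Fin N, ∑ j : Fin d, (M (s, i) (t, j))^2 := by
        refine Finset.sum_congr rfl fun s _ => Finset.sum_congr rfl fun i _ => ?_
        rw [Fintype.sum_prod_type]
    _ = ∑ s : Fin N, ∑ t : Fin N, ∑ i : Fin d, ∑ j : Fin d, (M (s, i) (t, j))^2 := by
        exact Finset.sum_congr rfl fun s _ => Finset.sum_comm
    _ = ∑ t : Fin N, ∑ s : Fin N, ∑ i : Fin d, ∑ j : Fin d, (M (s, i) (t, j))^2 :=
        Finset.sum_comm

lemma frobSq_decomp (M : Matrix (Fin N × Fin d) (Fin N × Fin d) ℝ)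
    (hM : BlockLowerTri M) (hMart : MartingaleCond M) :
    frobSq M = ∑ t : Fin N, ((N - (t : ℕ) : ℕ) : ℝ) * frobSq (diagBlock M t) := by
  rw [frobSq_prod]
  refine Finset.sum_congr rfl fun t _ => ?_
  calc ∑ s : Fin N, ∑ i : Fin d, ∑ j : Fin d, (M (s, i) (t, j))^2
      = ∑ s ∈ Finset.univ.filter (fun s : Fin N => t ≤ s),
          ∑ i : Fin d, ∑ j : Fin d, (M (s, i) (t, j))^2 := by
        refine (Finset.sum_filter_of_ne ?_).symm
        intro s _ hne
        by_contra hnot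
        apply hne
        have hst : s < t := lt_of_not_ge hnot
        refine Finset.sum_eq_zero fun i _ => Finset.sum_eq_zero fun j _ => ?_
        rw [hM s t hst i j]
        norm_num
    _ = ∑ s ∈ Finset.univ.filter (fun s : Fin N => t ≤ s), frobSq (diagBlock M t) := by
        refine Finset.sum_congr rfl fun s hs => ?_
        rw [frobSq]
        refine Finset.sum_congr rfl fun i _ => Finset.sum_congr rfl fun j _ => ?_
        rw [hMart s t (Finset.mem_filter.mp hs).2 i j]
        rfl
    _ = ((N - (t : ℕ) : ℕ) : ℝ) * frobSq (diagBlock M t) := by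
        rw [Finset.sum_const, card_ge, nsmul_eq_mul]

lemma frobSq_lower (L : Matrix (Fin N × Fin d) (Fin N × Fin d) ℝ) (hL : BlockLowerTri L) :
    frobSq L = ∑ t : Fin N, ∑ s ∈ Finset.univ.filter (fun s : Fin N => t ≤ s),
      frobSq (Matrix.of (fun i j : Fin d => L (s, i) (t, j))) := by
  rw [frobSq_prod]
  refine Finset.sum_congr rfl fun t _ => ?_
  calc ∑ s : Fin N, ∑ i : Fin d, ∑ j : Fin d, (L (s, i) (t, j))^2
      = ∑ s ∈ Finset.univ.filter (fun s : Fin N => t ≤ s),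
          ∑ i : Fin d, ∑ j : Fin d, (L (s, i) (t, j))^2 := by
        refine (Finset.sum_filter_of_ne ?_).symm
        intro s _ hne
        by_contra hnot
        apply hne
        have hst : s < t := lt_of_not_ge hnot
        refine Finset.sum_eq_zero fun i _ => Finset.sum_eq_zero fun j _ => ?_
        rw [hL s t hst i j]
        norm_num
    _ = ∑ s ∈ Finset.univ.filter (fun s : Fin N => t ≤ s),
          frobSq (Matrix.of (fun i j : Fin d => L (s, i) (t, j))) := by
        refine Finset.sum_congr rfl fun s _ => ?_
        rw [frobSq]
        rfl

lemma frobSq_Asum_le (L : Matrix (Fin N × Fin d) (Fin N × Fin d) ℝ) (t : Fin N) :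
    frobSq (Asum L t) ≤ ((N - (t : ℕ) : ℕ) : ℝ) *
      ∑ s ∈ Finset.univ.filter (fun s : Fin N => t ≤ s),
        frobSq (Matrix.of (fun i j : Fin d => L (s, i) (t, j))) := by
  have hbd : ∀ i j : Fin d, (Asum L t i j)^2 ≤ ((N - (t : ℕ) : ℕ) : ℝ) *
      ∑ s ∈ Finset.univ.filter (fun s : Fin N => t ≤ s), (L (s, i) (t, j))^2 := by
    intro i j
    rw [Asum_apply]
    have h := sq_sum_le_card_mul_sum_sq
      (s := Finset.univ.filter (fun s : Fin N => t ≤ s)) (f := fun s => L (s, i) (t, j))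
    rwa [card_ge] at h
  calc frobSq (Asum L t) ≤ ∑ i : Fin d, ∑ j : Fin d, ((N - (t : ℕ) : ℕ) : ℝ) *
      ∑ s ∈ Finset.univ.filter (fun s : Fin N => t ≤ s), (L (s, i) (t, j))^2 := by
        rw [frobSq]
        exact Finset.sum_le_sum fun i _ => Finset.sum_le_sum fun j _ => hbd i j
    _ = ((N - (t : ℕ) : ℕ) : ℝ) * ∑ i : Fin d, ∑ j : Fin d,
          ∑ s ∈ Finset.univ.filter (fun s : Fin N => t ≤ s), (L (s, i) (t, j))^2 := by
        rw [Finset.mul_sum]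
        refine Finset.sum_congr rfl fun i _ => ?_
        rw [Finset.mul_sum]
    _ = ((N - (t : ℕ) : ℕ) : ℝ) * ∑ s ∈ Finset.univ.filter (fun s : Fin N => t ≤ s),
          frobSq (Matrix.of (fun i j : Fin d => L (s, i) (t, j))) := by
        congr 1
        calc ∑ i : Fin d, ∑ j : Fin d, ∑ s ∈ Finset.univ.filter (fun s : Fin N => t ≤ s),
              (L (s, i) (t, j))^2
            = ∑ i : Fin d, ∑ s ∈ Finset.univ.filter (fun s : Fin N => t ≤ s),
              ∑ j : Fin d, (L (s, i) (t, j))^2 := by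
              exact Finset.sum_congr rfl fun i _ => Finset.sum_comm
          _ = ∑ s ∈ Finset.univ.filter (fun s : Fin N => t ≤ s),
              ∑ i : Fin d, ∑ j : Fin d, (L (s, i) (t, j))^2 := Finset.sum_comm
          _ = _ := by
              refine Finset.sum_congr rfl fun s _ => ?_
              rw [frobSq]
              rfl

lemma distAWsq_decomp (L M : Matrix (Fin N × Fin d) (Fin N × Fin d) ℝ)
    (hL : BlockLowerTri L) (hM : BlockLowerTri M) (hMart : MartingaleCond M) :
    distAWsq L M = frobSq L + ∑ t : Fin N,
      (((N - (t : ℕ) : ℕ) : ℝ) * frobSq (diagBlock M t)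
        - 2 * nuclearNorm ((Asum L t)ᵀ * diagBlock M t)) := by
  rw [distAWsq, frobSq_decomp M hM hMart]
  have h1 : ∑ t : Fin N, nuclearNorm (diagBlock (Lᵀ * M) t)
      = ∑ t : Fin N, nuclearNorm ((Asum L t)ᵀ * diagBlock M t) :=
    Finset.sum_congr rfl fun t _ => by rw [diagBlock_LtM L M hL hMart t]
  rw [h1, Finset.mul_sum, add_sub_assoc, ← Finset.sum_sub_distrib]

lemma distAWsq_nonneg (L M : Matrix (Fin N × Fin d) (Fin N × Fin d) ℝ)
    (hL : BlockLowerTri L) (hM : BlockLowerTri M) (hMart : MartingaleCond M) :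
    0 ≤ distAWsq L M := by
  rw [distAWsq_decomp L M hL hM hMart]
  have hterm : ∀ t : Fin N,
      -(∑ s ∈ Finset.univ.filter (fun s : Fin N => t ≤ s),
          frobSq (Matrix.of (fun i j : Fin d => L (s, i) (t, j))))
      ≤ ((N - (t : ℕ) : ℕ) : ℝ) * frobSq (diagBlock M t)
        - 2 * nuclearNorm ((Asum L t)ᵀ * diagBlock M t) := by
    intro t
    have hpos := ntR_pos t
    have h1 := (gval_key ((N - (t : ℕ) : ℕ) : ℝ) hpos (Asum L t) (diagBlock M t)).1
    have h2 : frobSq (Asum L t) / ((N - (t : ℕ) : ℕ) : ℝ)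
        ≤ ∑ s ∈ Finset.univ.filter (fun s : Fin N => t ≤ s),
          frobSq (Matrix.of (fun i j : Fin d => L (s, i) (t, j))) := by
      rw [div_le_iff₀ hpos, mul_comm]
      exact frobSq_Asum_le L t
    linarith
  have hsum : -(frobSq L) ≤ ∑ t : Fin N,
      (((N - (t : ℕ) : ℕ) : ℝ) * frobSq (diagBlock M t)
        - 2 * nuclearNorm ((Asum L t)ᵀ * diagBlock M t)) := by
    rw [frobSq_lower L hL, ← Finset.sum_neg_distrib]
    exact Finset.sum_le_sum fun t _ => hterm t
  linarith

end Decomp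

lemma sqrt_le_implies {a b : ℝ} (ha : 0 ≤ a) (hb : 0 ≤ b)
    (h : Real.sqrt a ≤ Real.sqrt b) : a ≤ b := by
  calc a = Real.sqrt a ^ 2 := (Real.sq_sqrt ha).symm
    _ ≤ Real.sqrt b ^ 2 := by
        exact pow_le_pow_left₀ (Real.sqrt_nonneg a) h 2
    _ = b := Real.sq_sqrt hb

/-- Characterization of the `dist_AW`-projection of a block lower triangular
matrix `L` onto the set of martingale Cholesky factors: `M̂` is a minimizer iff
its diagonal blocks are the column-block averages of `L` composed with
arbitrary orthogonal matrices. -/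
theorem martingale_projection (N d : ℕ)
    (L Mhat : Matrix (Fin N × Fin d) (Fin N × Fin d) ℝ)
    (hL : BlockLowerTri L)
    (hMhat : BlockLowerTri Mhat) (hMhatMart : MartingaleCond Mhat) :
    (∀ M : Matrix (Fin N × Fin d) (Fin N × Fin d) ℝ,
        BlockLowerTri M → MartingaleCond M → distAW L Mhat ≤ distAW L M) ↔
      ∃ Q : Fin N → Matrix (Fin d) (Fin d) ℝ,
        (∀ t, (Q t)ᵀ * Q t = 1) ∧
        ∀ t : Fin N, diagBlock Mhat t =
          (((N - (t : ℕ) : ℕ) : ℝ)⁻¹ •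
            ∑ s ∈ Finset.univ.filter (fun s : Fin N => t ≤ s),
              Matrix.of (fun i j : Fin d => L (s, i) (t, j))) * Q t := by
  constructor
  · intro H
    have key : ∀ t₀ : Fin N, ∃ Q : Matrix (Fin d) (Fin d) ℝ, Qᵀ * Q = 1 ∧
        diagBlock Mhat t₀ = (((N - (t₀ : ℕ) : ℕ) : ℝ)⁻¹ • Asum L t₀) * Q := by
      intro t₀
      set n₀ : ℝ := ((N - (t₀ : ℕ) : ℕ) : ℝ) with hn₀def
      have hn₀ : 0 < n₀ := ntR_pos t₀
      set Xopt : Matrix (Fin d) (Fin d) ℝ := n₀⁻¹ • Asum L t₀ with hXoptdef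
      set M' : Matrix (Fin N × Fin d) (Fin N × Fin d) ℝ :=
        fun p q => if q.1 = t₀ then (if t₀ ≤ p.1 then Xopt p.2 q.2 else 0)
          else Mhat p q with hM'def
      have hM'low : BlockLowerTri M' := by
        intro s t hst i j
        show (if t = t₀ then (if t₀ ≤ s then Xopt i j else 0) else Mhat (s, i) (t, j)) = 0
        by_cases h : t = t₀
        · subst h
          rw [if_pos rfl, if_neg (not_le.mpr hst)]
        · rw [if_neg h]
          exact hMhat s t hst i j
      have hM'mart : MartingaleCond M' := by
        intro s t hts i j
        show (if t = t₀ then (if t₀ ≤ s then Xopt i j else 0) else Mhat (s, i) (t, j))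
          = (if t = t₀ then (if t₀ ≤ t then Xopt i j else 0) else Mhat (t, i) (t, j))
        by_cases h : t = t₀
        · subst h
          rw [if_pos rfl, if_pos rfl, if_pos hts, if_pos le_rfl]
        · rw [if_neg h, if_neg h]
          exact hMhatMart s t hts i j
      have hdon : diagBlock M' t₀ = Xopt := by
        ext i j
        show (if t₀ = t₀ then (if t₀ ≤ t₀ then Xopt i j else 0) else Mhat (t₀, i) (t₀, j))
          = Xopt i j
        rw [if_pos rfl, if_pos le_rfl]
      have hdoff : ∀ t : Fin N, t ≠ t₀ → diagBlock M' t = diagBlock Mhat t := by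
        intro t ht
        ext i j
        show (if t = t₀ then (if t₀ ≤ t then Xopt i j else 0) else Mhat (t, i) (t, j))
          = Mhat (t, i) (t, j)
        rw [if_neg ht]
      have hle : distAWsq L Mhat ≤ distAWsq L M' :=
        sqrt_le_implies (distAWsq_nonneg L Mhat hL hMhat hMhatMart)
          (distAWsq_nonneg L M' hL hM'low hM'mart) (H M' hM'low hM'mart)
      rw [distAWsq_decomp L Mhat hL hMhat hMhatMart,
        distAWsq_decomp L M' hL hM'low hM'mart] at hle
      have hsum : ∑ t : Fin N,
          (((N - (t : ℕ) : ℕ) : ℝ) * frobSq (diagBlock Mhat t)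
            - 2 * nuclearNorm ((Asum L t)ᵀ * diagBlock Mhat t))
          ≤ ∑ t : Fin N,
          (((N - (t : ℕ) : ℕ) : ℝ) * frobSq (diagBlock M' t)
            - 2 * nuclearNorm ((Asum L t)ᵀ * diagBlock M' t)) := by linarith
      have hofft : ∑ t ∈ Finset.univ.erase t₀,
          (((N - (t : ℕ) : ℕ) : ℝ) * frobSq (diagBlock Mhat t)
            - 2 * nuclearNorm ((Asum L t)ᵀ * diagBlock Mhat t))
          = ∑ t ∈ Finset.univ.erase t₀,
          (((N - (t : ℕ) : ℕ) : ℝ) * frobSq (diagBlock M' t)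
            - 2 * nuclearNorm ((Asum L t)ᵀ * diagBlock M' t)) :=
        Finset.sum_congr rfl fun t ht => by rw [hdoff t (Finset.mem_erase.mp ht).1]
      have e1 := Finset.add_sum_erase Finset.univ (fun t : Fin N =>
          (((N - (t : ℕ) : ℕ) : ℝ) * frobSq (diagBlock Mhat t)
            - 2 * nuclearNorm ((Asum L t)ᵀ * diagBlock Mhat t))) (Finset.mem_univ t₀)
      have e2 := Finset.add_sum_erase Finset.univ (fun t : Fin N =>
          (((N - (t : ℕ) : ℕ) : ℝ) * frobSq (diagBlock M' t)
            - 2 * nuclearNorm ((Asum L t)ᵀ * diagBlock M' t))) (Finset.mem_univ t₀)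
      have ht₀ : n₀ * frobSq (diagBlock Mhat t₀)
          - 2 * nuclearNorm ((Asum L t₀)ᵀ * diagBlock Mhat t₀)
          ≤ n₀ * frobSq (diagBlock M' t₀)
          - 2 * nuclearNorm ((Asum L t₀)ᵀ * diagBlock M' t₀) := by
        linarith
      have hGt₀ : n₀ * frobSq (diagBlock M' t₀)
          - 2 * nuclearNorm ((Asum L t₀)ᵀ * diagBlock M' t₀)
          = -(frobSq (Asum L t₀) / n₀) := by
        refine (gval_key n₀ hn₀ (Asum L t₀) (diagBlock M' t₀)).2.mpr ⟨1, by simp, ?_⟩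
        rw [hdon, hXoptdef, mul_one]
      have hFt₀ : n₀ * frobSq (diagBlock Mhat t₀)
          - 2 * nuclearNorm ((Asum L t₀)ᵀ * diagBlock Mhat t₀)
          = -(frobSq (Asum L t₀) / n₀) := by
        have hlow := (gval_key n₀ hn₀ (Asum L t₀) (diagBlock Mhat t₀)).1
        linarith
      exact (gval_key n₀ hn₀ (Asum L t₀) (diagBlock Mhat t₀)).2.mp hFt₀
    choose Qf hQ1 hQ2 using key
    exact ⟨Qf, hQ1, fun t => hQ2 t⟩
  · rintro ⟨Q, hQorth, hQdiag⟩ M hMlow hMmart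
    rw [distAW, distAW]
    apply Real.sqrt_le_sqrt
    rw [distAWsq_decomp L Mhat hL hMhat hMhatMart, distAWsq_decomp L M hL hMlow hMmart]
    refine add_le_add_right (Finset.sum_le_sum fun t _ => ?_) _
    have hnt := ntR_pos (N := N) t
    have h1 : ((N - (t : ℕ) : ℕ) : ℝ) * frobSq (diagBlock Mhat t)
        - 2 * nuclearNorm ((Asum L t)ᵀ * diagBlock Mhat t)
        = -(frobSq (Asum L t) / ((N - (t : ℕ) : ℕ) : ℝ)) :=
      (gval_key _ hnt (Asum L t) (diagBlock Mhat t)).2.mpr ⟨Q t, hQorth t, hQdiag t⟩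
    have h2 := (gval_key _ hnt (Asum L t) (diagBlock M t)).1
    linarith
end
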